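/- The hybrid orthogonalization vector z_j satisfies: (i) z_jᵀ x_k = 0 for every k ∈ Ŝ∖{j}; (ii) z_jᵀ x_k = z_jᵀ ψ_k^{(j)} and |z_jᵀ x_k| ≤ √n λ_j ‖ψ_k^{(j)}‖₂ for every k ∈ Ŝᶜ∖{j}; and (iii) z_jᵀ x_j = ‖z_j‖₂² + √n λ_j ∑_{k∈Ŝᶜ∖{j}} ‖ψ_k^{(j)}‖₂ |(ω̂_j)_k| ≥ ‖z_j‖₂². Consequently, if z_j ≠ 0 the noise factor τ_j = ‖z_j‖₂ / |z_jᵀ x_j| satisfies τ_j ≤ 1/‖z_j‖₂. -/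

import Mathlib

/-!
Statement 7: properties of the hybrid orthogonalization vector `z_j`:
(i) exact orthogonality to the identifiable columns, (ii) KKT bounds against
the remaining residualized columns, (iii) the identity
`z_jᵀ x_j = ‖z_j‖₂² + √n λ_j ∑_{k∈Ŝᶜ∖{j}} ‖ψ_k^{(j)}‖₂ |ω̂_k| ≥ ‖z_j‖₂²`,
and the consequent bound `τ_j ≤ 1/‖z_j‖₂` on the noise factor.
-/

noncomputable section

open Finset Matrix

namespace HOT

variable {n p : ℕ}

/-- `k`-th column of `X`. -/
def col (X : Matrix (Fin n) (Fin p) ℝ) (k : Fin p) : Fin n → ℝ := fun i => X i k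

/-- Submatrix of `X` consisting of the columns indexed by `S`. -/
def sub (X : Matrix (Fin n) (Fin p) ℝ) (S : Finset (Fin p)) : Matrix (Fin n) ↥S ℝ :=
  Matrix.of fun i k => X i (k : Fin p)

/-- Gram matrix `X_Sᵀ X_S`. -/
def gram (X : Matrix (Fin n) (Fin p) ℝ) (S : Finset (Fin p)) : Matrix ↥S ↥S ℝ :=
  (sub X S)ᵀ * sub X S

/-- Orthogonal projection `P_S = X_S (X_Sᵀ X_S)⁻¹ X_Sᵀ` onto the column space of `X_S`. -/
def proj (X : Matrix (Fin n) (Fin p) ℝ) (S : Finset (Fin p)) : Matrix (Fin n) (Fin n) ℝ :=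
  sub X S * (gram X S)⁻¹ * (sub X S)ᵀ

/-- `ψ_k^{(j)} = (I_n − P_{Ŝ∖{j}}) x_k`. -/
def psi (X : Matrix (Fin n) (Fin p) ℝ) (S : Finset (Fin p)) (j k : Fin p) : Fin n → ℝ :=
  col X k - (proj X (S.erase j)).mulVec (col X k)

/-- `v_{jk} = ‖ψ_k^{(j)}‖₂ / √n`. -/
def v (X : Matrix (Fin n) (Fin p) ℝ) (S : Finset (Fin p)) (j k : Fin p) : ℝ :=
  Real.sqrt (∑ i, (psi X S j k i) ^ 2) / Real.sqrt n

/-- The relaxed-orthogonalization objective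
`g(b) = (2n)⁻¹ ‖ψ_j^{(j)} − ∑_{k∈Ŝᶜ∖{j}} b_k ψ_k^{(j)}‖₂² + λ_j ∑_{k∈Ŝᶜ∖{j}} v_{jk} |b_k|`. -/
def gObj (X : Matrix (Fin n) (Fin p) ℝ) (S : Finset (Fin p)) (j : Fin p) (lam : ℝ)
    (b : Fin p → ℝ) : ℝ :=
  (2 * n : ℝ)⁻¹ * ∑ i, (psi X S j j i - ∑ k ∈ Sᶜ.erase j, b k * psi X S j k i) ^ 2
    + lam * ∑ k ∈ Sᶜ.erase j, v X S j k * |b k|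

/-- The hybrid orthogonalization vector `z_j = ψ_j^{(j)} − ∑_{k∈Ŝᶜ∖{j}} ω̂_k ψ_k^{(j)}`. -/
def zvec (X : Matrix (Fin n) (Fin p) ℝ) (S : Finset (Fin p)) (j : Fin p)
    (ωhat : Fin p → ℝ) : Fin n → ℝ :=
  fun i => psi X S j j i - ∑ k ∈ Sᶜ.erase j, ωhat k * psi X S j k i

/-- ε-argument: if `c ≤ d + t * M` for all small positive `t`, then `c ≤ d`. -/
lemma aux_le (c d M δ : ℝ) (hM : 0 ≤ M) (hδ : 0 < δ)
    (h : ∀ t : ℝ, 0 < t → t < δ → c ≤ d + t * M) : c ≤ d := by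
  by_contra hcd
  push_neg at hcd
  set ε := c - d with hε
  have hεpos : 0 < ε := by simp [hε]; linarith
  set t := min (δ / 2) (ε / (M + 1)) with ht
  have htpos : 0 < t := lt_min (by linarith) (by positivity)
  have htδ : t < δ := lt_of_le_of_lt (min_le_left _ _) (by linarith)
  have h1 := h t htpos htδ
  have h2 : t * M ≤ ε * (M / (M + 1)) := by
    have : t ≤ ε / (M + 1) := min_le_right _ _
    calc t * M ≤ (ε / (M + 1)) * M := mul_le_mul_of_nonneg_right this hM
      _ = ε * (M / (M + 1)) := by ring
  have h3 : M / (M + 1) < 1 := by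
    rw [div_lt_one (by linarith)]; linarith
  have h4 : ε * (M / (M + 1)) < ε * 1 :=
    mul_lt_mul_of_pos_left h3 hεpos
  simp at h4
  linarith

lemma gram_symm (X : Matrix (Fin n) (Fin p) ℝ) (S : Finset (Fin p)) :
    (gram X S)ᵀ = gram X S := by
  rw [gram, Matrix.transpose_mul, Matrix.transpose_transpose]

lemma proj_symm (X : Matrix (Fin n) (Fin p) ℝ) (S : Finset (Fin p)) :
    (proj X S)ᵀ = proj X S := by
  rw [proj, Matrix.transpose_mul, Matrix.transpose_mul, Matrix.transpose_transpose,
    Matrix.transpose_nonsing_inv, gram_symm, Matrix.mul_assoc]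

lemma proj_mul_sub (X : Matrix (Fin n) (Fin p) ℝ) (S : Finset (Fin p))
    (hG : IsUnit (gram X S)) : proj X S * sub X S = sub X S := by
  have hdet : IsUnit (gram X S).det := (Matrix.isUnit_iff_isUnit_det _).mp hG
  calc proj X S * sub X S = sub X S * ((gram X S)⁻¹ * gram X S) := by
        rw [proj, gram, Matrix.mul_assoc, Matrix.mul_assoc]
    _ = sub X S := by rw [Matrix.nonsing_inv_mul _ hdet, Matrix.mul_one]

lemma proj_idem (X : Matrix (Fin n) (Fin p) ℝ) (S : Finset (Fin p))
    (hG : IsUnit (gram X S)) : proj X S * proj X S = proj X S := by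
  have h1 : proj X S * proj X S = (proj X S * sub X S) * (gram X S)⁻¹ * (sub X S)ᵀ := by
    simp only [proj, Matrix.mul_assoc]
  rw [h1, proj_mul_sub X S hG, proj]

/-- For `z = (I − P) y`, `z` is orthogonal to anything in the range of `P`. -/
lemma proj_orth (X : Matrix (Fin n) (Fin p) ℝ) (S : Finset (Fin p))
    (hG : IsUnit (gram X S)) (y w : Fin n → ℝ) :
    ∑ i, (y i - (proj X S).mulVec y i) * ((proj X S).mulVec w) i = 0 := by
  set P := proj X S with hP
  have h0 : (fun i => y i - P.mulVec y i) = y - P.mulVec y := rfl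
  have h1 : ∑ i, (y i - P.mulVec y i) * (P.mulVec w) i
      = (y - P.mulVec y) ⬝ᵥ (P.mulVec w) := rfl
  rw [h1, Matrix.dotProduct_mulVec, ← Matrix.mulVec_transpose, proj_symm]
  have h2 : P.mulVec (y - P.mulVec y) = 0 := by
    rw [Matrix.mulVec_sub, Matrix.mulVec_mulVec, proj_idem X S hG, sub_self]
  rw [← hP, h2]
  simp [dotProduct]

set_option maxHeartbeats 2000000 in
theorem hybrid_orthogonalization_properties (hn : 0 < n)
    (X : Matrix (Fin n) (Fin p) ℝ) (j : Fin p) (S : Finset (Fin p))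
    (hG : IsUnit (gram X (S.erase j)))
    (lam : ℝ) (hlam : 0 < lam)
    (ωhat : Fin p → ℝ) (hω : ∀ b : Fin p → ℝ, gObj X S j lam ωhat ≤ gObj X S j lam b) :
    (∀ k ∈ S.erase j, ∑ i, zvec X S j ωhat i * X i k = 0) ∧
    (∀ k ∈ Sᶜ.erase j,
        (∑ i, zvec X S j ωhat i * X i k) = (∑ i, zvec X S j ωhat i * psi X S j k i) ∧
        |∑ i, zvec X S j ωhat i * X i k|
          ≤ Real.sqrt n * lam * Real.sqrt (∑ i, (psi X S j k i) ^ 2)) ∧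
    ((∑ i, zvec X S j ωhat i * X i j)
        = (∑ i, (zvec X S j ωhat i) ^ 2)
          + Real.sqrt n * lam
            * ∑ k ∈ Sᶜ.erase j, Real.sqrt (∑ i, (psi X S j k i) ^ 2) * |ωhat k| ∧
      (∑ i, (zvec X S j ωhat i) ^ 2) ≤ ∑ i, zvec X S j ωhat i * X i j) ∧
    (zvec X S j ωhat ≠ 0 →
      Real.sqrt (∑ i, (zvec X S j ωhat i) ^ 2) / |∑ i, zvec X S j ωhat i * X i j|
        ≤ 1 / Real.sqrt (∑ i, (zvec X S j ωhat i) ^ 2)) := by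
  classical
  set P := proj X (S.erase j) with hPdef
  set Z := zvec X S j ωhat with hZdef
  set y : Fin n → ℝ := fun i => X i j - ∑ k ∈ Sᶜ.erase j, ωhat k * X i k with hy
  -- z = (I - P) y
  have hz : ∀ i, Z i = y i - P.mulVec y i := by
    intro i
    have hPy : P.mulVec y i
        = P.mulVec (col X j) i - ∑ k ∈ Sᶜ.erase j, ωhat k * P.mulVec (col X k) i := by
      simp only [Matrix.mulVec, dotProduct, hy, col, mul_sub, Finset.mul_sum,
        Finset.sum_sub_distrib]
      congr 1
      rw [Finset.sum_comm]
      exact Finset.sum_congr rfl fun k _ =>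
        Finset.sum_congr rfl fun m _ => by ring
    rw [hPy]
    simp only [hZdef, zvec, psi, Pi.sub_apply, hPy, col, hy]
    simp only [mul_sub, Finset.sum_sub_distrib, ← hPdef]
    ring
  -- z is orthogonal to anything in the range of P
  have key : ∀ w : Fin n → ℝ, ∑ i, Z i * (P.mulVec w) i = 0 := by
    intro w
    have := proj_orth X (S.erase j) hG y w
    rw [← this]
    exact Finset.sum_congr rfl fun i _ => by rw [hz i]
  -- for any k, z ⬝ x_k = z ⬝ ψ_k
  have hx_eq : ∀ k : Fin p, ∑ i, Z i * X i k = ∑ i, Z i * psi X S j k i := by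
    intro k
    have hXk : ∀ i, X i k = psi X S j k i + P.mulVec (col X k) i := by
      intro i; simp [psi, col, ← hPdef]
    calc ∑ i, Z i * X i k
        = ∑ i, (Z i * psi X S j k i + Z i * P.mulVec (col X k) i) := by
          refine Finset.sum_congr rfl fun i _ => ?_; rw [hXk i]; ring
      _ = ∑ i, Z i * psi X S j k i + ∑ i, Z i * P.mulVec (col X k) i :=
          Finset.sum_add_distrib
      _ = ∑ i, Z i * psi X S j k i := by rw [key]; ring
  -- part (i)
  have part1 : ∀ k ∈ S.erase j, ∑ i, Z i * X i k = 0 := by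
    intro k hk
    have hcol : col X k = (sub X (S.erase j)).mulVec (Pi.single (⟨k, hk⟩ : ↥(S.erase j)) 1) := by
      funext i
      rw [Matrix.mulVec_single]
      simp [col, sub]
    have hPx : P.mulVec (col X k) = col X k := by
      rw [hcol, Matrix.mulVec_mulVec, proj_mul_sub X (S.erase j) hG]
    calc ∑ i, Z i * X i k = ∑ i, Z i * (P.mulVec (col X k)) i := by
          rw [hPx]; rfl
      _ = 0 := key _
  -- real constants
  have hnR : (0:ℝ) < (n:ℝ) := by exact_mod_cast hn
  have hA2 : ∀ k : Fin p, (0:ℝ) ≤ ∑ i, psi X S j k i ^ 2 :=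
    fun k => Finset.sum_nonneg fun i _ => sq_nonneg _
  have hv : ∀ k : Fin p, 0 ≤ v X S j k :=
    fun k => div_nonneg (Real.sqrt_nonneg _) (Real.sqrt_nonneg _)
  -- the basic variational inequality
  have hK : ∀ k₀ ∈ Sᶜ.erase j, ∀ t : ℝ,
      0 ≤ t ^ 2 * (∑ i, psi X S j k₀ i ^ 2) - 2 * t * (∑ i, Z i * psi X S j k₀ i)
        + 2 * (n:ℝ) * lam * v X S j k₀ * (|ωhat k₀ + t| - |ωhat k₀|) := by
    intro k₀ hk₀ t
    set b := Function.update ωhat k₀ (ωhat k₀ + t) with hbdef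
    have hbk₀ : b k₀ = ωhat k₀ + t := Function.update_self _ _ _
    have hbne : ∀ k ∈ (Sᶜ.erase j).erase k₀, b k = ωhat k :=
      fun k hk => Function.update_of_ne (Finset.ne_of_mem_erase hk) _ _
    have hsum : ∀ F : Fin p → ℝ, ∑ k ∈ Sᶜ.erase j, b k * F k
        = (∑ k ∈ Sᶜ.erase j, ωhat k * F k) + t * F k₀ := by
      intro F
      rw [← Finset.add_sum_erase _ (fun k => b k * F k) hk₀,
        ← Finset.add_sum_erase _ (fun k => ωhat k * F k) hk₀]
      have h2 : ∑ k ∈ (Sᶜ.erase j).erase k₀, b k * F k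
          = ∑ k ∈ (Sᶜ.erase j).erase k₀, ωhat k * F k :=
        Finset.sum_congr rfl fun k hk => by rw [hbne k hk]
      rw [hbk₀, h2]; ring
    have hpen : ∑ k ∈ Sᶜ.erase j, v X S j k * |b k|
        = (∑ k ∈ Sᶜ.erase j, v X S j k * |ωhat k|)
          + v X S j k₀ * (|ωhat k₀ + t| - |ωhat k₀|) := by
      rw [← Finset.add_sum_erase _ (fun k => v X S j k * |b k|) hk₀,
        ← Finset.add_sum_erase _ (fun k => v X S j k * |ωhat k|) hk₀]
      have h2 : ∑ k ∈ (Sᶜ.erase j).erase k₀, v X S j k * |b k|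
          = ∑ k ∈ (Sᶜ.erase j).erase k₀, v X S j k * |ωhat k| :=
        Finset.sum_congr rfl fun k hk => by rw [hbne k hk]
      rw [hbk₀, h2]; ring
    have hzb : ∀ i, psi X S j j i - ∑ k ∈ Sᶜ.erase j, b k * psi X S j k i
        = Z i - t * psi X S j k₀ i := by
      intro i
      rw [hsum (fun k => psi X S j k i)]
      simp only [hZdef, zvec]
      ring
    have hquad : ∑ i, (psi X S j j i - ∑ k ∈ Sᶜ.erase j, b k * psi X S j k i) ^ 2
        = (∑ i, Z i ^ 2) - 2 * t * (∑ i, Z i * psi X S j k₀ i)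
          + t ^ 2 * (∑ i, psi X S j k₀ i ^ 2) := by
      calc ∑ i, (psi X S j j i - ∑ k ∈ Sᶜ.erase j, b k * psi X S j k i) ^ 2
          = ∑ i, (Z i ^ 2 - 2 * t * (Z i * psi X S j k₀ i)
              + t ^ 2 * psi X S j k₀ i ^ 2) :=
            Finset.sum_congr rfl fun i _ => by rw [hzb i]; ring
        _ = _ := by
            rw [Finset.sum_add_distrib, Finset.sum_sub_distrib, ← Finset.mul_sum,
              ← Finset.mul_sum]
    have hgb : gObj X S j lam b
        = (2 * (n:ℝ))⁻¹ * ((∑ i, Z i ^ 2) - 2 * t * (∑ i, Z i * psi X S j k₀ i)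
            + t ^ 2 * (∑ i, psi X S j k₀ i ^ 2))
          + lam * ((∑ k ∈ Sᶜ.erase j, v X S j k * |ωhat k|)
            + v X S j k₀ * (|ωhat k₀ + t| - |ωhat k₀|)) := by
      rw [gObj, hquad, hpen]
    have hgw : gObj X S j lam ωhat
        = (2 * (n:ℝ))⁻¹ * (∑ i, Z i ^ 2)
          + lam * (∑ k ∈ Sᶜ.erase j, v X S j k * |ωhat k|) := rfl
    have hb0 := hω b
    rw [hgb, hgw] at hb0
    have h2n : (0:ℝ) < 2 * (n:ℝ) := by linarith
    have h5 : 0 ≤ (2 * (n:ℝ))⁻¹ * (t ^ 2 * (∑ i, psi X S j k₀ i ^ 2)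
        - 2 * t * (∑ i, Z i * psi X S j k₀ i))
        + lam * (v X S j k₀ * (|ωhat k₀ + t| - |ωhat k₀|)) := by nlinarith [hb0]
    have h6 := mul_nonneg h2n.le h5
    rw [mul_add, ← mul_assoc, mul_inv_cancel₀ h2n.ne', one_mul] at h6
    nlinarith [h6]
  -- |c k| ≤ n λ v_k
  have habs : ∀ k₀ ∈ Sᶜ.erase j,
      |∑ i, Z i * psi X S j k₀ i| ≤ (n:ℝ) * lam * v X S j k₀ := by
    intro k₀ hk₀
    set c := ∑ i, Z i * psi X S j k₀ i with hcdef
    set A2 := ∑ i, psi X S j k₀ i ^ 2 with hA2def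
    set w := ωhat k₀ with hwdef
    set vk := v X S j k₀ with hvkdef
    have hA2nn : 0 ≤ A2 := by rw [hA2def]; exact hA2 k₀
    have hvknn : 0 ≤ vk := by rw [hvkdef]; exact hv k₀
    have hco : 0 ≤ 2 * (n:ℝ) * lam * vk := by positivity
    have hc1 : c ≤ (n:ℝ) * lam * vk := by
      apply aux_le c ((n:ℝ) * lam * vk) (A2 / 2) 1 (by linarith) one_pos
      intro t ht _
      have h1 := hK k₀ hk₀ t
      rw [← hcdef, ← hA2def, ← hwdef, ← hvkdef] at h1
      have habs1 : |w + t| - |w| ≤ t := by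
        have := abs_add_le w t
        rw [abs_of_pos ht] at this
        linarith
      have h2 := mul_le_mul_of_nonneg_left habs1 hco
      have h3 : (2 * t) * c ≤ (2 * t) * ((n:ℝ) * lam * vk + t * (A2 / 2)) := by
        nlinarith [h1, h2]
      exact le_of_mul_le_mul_left h3 (by linarith)
    have hc2 : -c ≤ (n:ℝ) * lam * vk := by
      apply aux_le (-c) ((n:ℝ) * lam * vk) (A2 / 2) 1 (by linarith) one_pos
      intro t ht _
      have h1 := hK k₀ hk₀ (-t)
      rw [← hcdef, ← hA2def, ← hwdef, ← hvkdef] at h1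
      have habs1 : |w + -t| - |w| ≤ t := by
        have h0 : |w + -t| - |w| ≤ |(w + -t) - w| := abs_sub_abs_le_abs_sub _ _
        have he : (w + -t) - w = -t := by ring
        rw [he, abs_neg, abs_of_pos ht] at h0
        exact h0
      have h2 := mul_le_mul_of_nonneg_left habs1 hco
      have h3 : (2 * t) * (-c) ≤ (2 * t) * ((n:ℝ) * lam * vk + t * (A2 / 2)) := by
        nlinarith [h1, h2]
      exact le_of_mul_le_mul_left h3 (by linarith)
    exact abs_le.mpr ⟨by linarith, hc1⟩
  -- c k * ω k = n λ v_k |ω k|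
  have heqk : ∀ k₀ ∈ Sᶜ.erase j,
      (∑ i, Z i * psi X S j k₀ i) * ωhat k₀ = (n:ℝ) * lam * v X S j k₀ * |ωhat k₀| := by
    intro k₀ hk₀
    set c := ∑ i, Z i * psi X S j k₀ i with hcdef
    set A2 := ∑ i, psi X S j k₀ i ^ 2 with hA2def
    set w := ωhat k₀ with hwdef
    set vk := v X S j k₀ with hvkdef
    have hA2nn : 0 ≤ A2 := by rw [hA2def]; exact hA2 k₀
    by_cases hw0 : w = 0
    · simp [hw0]
    rcases lt_or_gt_of_ne hw0 with hneg | hpos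
    · -- w < 0 : here c = -(n λ v_k)
      have hc1 : c ≤ -((n:ℝ) * lam * vk) := by
        apply aux_le c (-((n:ℝ) * lam * vk)) (A2 / 2) (-w) (by linarith) (by linarith)
        intro t ht htw
        have h1 := hK k₀ hk₀ t
        rw [← hcdef, ← hA2def, ← hwdef, ← hvkdef] at h1
        have habs1 : |w + t| - |w| = -t := by
          rw [abs_of_neg hneg, abs_of_neg (by linarith : w + t < 0)]
          ring
        rw [habs1] at h1
        have h3 : (2 * t) * c ≤ (2 * t) * (-((n:ℝ) * lam * vk) + t * (A2 / 2)) := by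
          nlinarith [h1]
        exact le_of_mul_le_mul_left h3 (by linarith)
      have hc2 : -((n:ℝ) * lam * vk) ≤ c := by
        have h4 : -c ≤ (n:ℝ) * lam * vk := by
          apply aux_le (-c) ((n:ℝ) * lam * vk) (A2 / 2) 1 (by linarith) one_pos
          intro t ht _
          have h1 := hK k₀ hk₀ (-t)
          rw [← hcdef, ← hA2def, ← hwdef, ← hvkdef] at h1
          have habs1 : |w + -t| - |w| = t := by
            rw [abs_of_neg hneg, abs_of_neg (by linarith : w + -t < 0)]
            ring
          rw [habs1] at h1
          have h3 : (2 * t) * (-c) ≤ (2 * t) * ((n:ℝ) * lam * vk + t * (A2 / 2)) := by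
            nlinarith [h1]
          exact le_of_mul_le_mul_left h3 (by linarith)
        linarith
      have hc : c = -((n:ℝ) * lam * vk) := le_antisymm hc1 hc2
      rw [hc, abs_of_neg hneg]
      ring
    · -- w > 0 : here c = n λ v_k
      have hc1 : c ≤ (n:ℝ) * lam * vk := by
        apply aux_le c ((n:ℝ) * lam * vk) (A2 / 2) 1 (by linarith) one_pos
        intro t ht _
        have h1 := hK k₀ hk₀ t
        rw [← hcdef, ← hA2def, ← hwdef, ← hvkdef] at h1
        have habs1 : |w + t| - |w| = t := by
          rw [abs_of_pos hpos, abs_of_pos (by linarith : 0 < w + t)]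
          ring
        rw [habs1] at h1
        have h3 : (2 * t) * c ≤ (2 * t) * ((n:ℝ) * lam * vk + t * (A2 / 2)) := by
          nlinarith [h1]
        exact le_of_mul_le_mul_left h3 (by linarith)
      have hc2 : (n:ℝ) * lam * vk ≤ c := by
        apply aux_le ((n:ℝ) * lam * vk) c (A2 / 2) w (by linarith) hpos
        intro t ht htw
        have h1 := hK k₀ hk₀ (-t)
        rw [← hcdef, ← hA2def, ← hwdef, ← hvkdef] at h1
        have habs1 : |w + -t| - |w| = -t := by
          rw [abs_of_pos hpos, abs_of_pos (by linarith : 0 < w + -t)]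
          ring
        rw [habs1] at h1
        have h3 : (2 * t) * ((n:ℝ) * lam * vk) ≤ (2 * t) * (c + t * (A2 / 2)) := by
          nlinarith [h1]
        exact le_of_mul_le_mul_left h3 (by linarith)
      have hc : c = (n:ℝ) * lam * vk := le_antisymm hc1 hc2
      rw [hc, abs_of_pos hpos]
  -- conversion n λ v_k = √n λ ‖ψ_k‖
  have hnv : ∀ k : Fin p, (n:ℝ) * lam * v X S j k
      = Real.sqrt n * lam * Real.sqrt (∑ i, psi X S j k i ^ 2) := by
    intro k
    have hsn : (0:ℝ) < Real.sqrt n := Real.sqrt_pos.mpr hnR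
    have hss : Real.sqrt n * Real.sqrt n = (n:ℝ) := Real.mul_self_sqrt hnR.le
    rw [show v X S j k = Real.sqrt (∑ i, psi X S j k i ^ 2) / Real.sqrt n from rfl]
    field_simp
    linear_combination (-1 : ℝ) * Real.sqrt (∑ i, psi X S j k i ^ 2) * hss
  -- part (ii)
  have part2 : ∀ k ∈ Sᶜ.erase j,
      (∑ i, Z i * X i k) = (∑ i, Z i * psi X S j k i) ∧
      |∑ i, Z i * X i k| ≤ Real.sqrt n * lam * Real.sqrt (∑ i, psi X S j k i ^ 2) := by
    intro k hk
    refine ⟨hx_eq k, ?_⟩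
    rw [hx_eq k, ← hnv k]
    exact habs k hk
  -- part (iii)
  have h3a : ∑ i, Z i * psi X S j j i
      = (∑ i, Z i ^ 2) + ∑ k ∈ Sᶜ.erase j, ωhat k * (∑ i, Z i * psi X S j k i) := by
    have hdec : ∀ i, psi X S j j i = Z i + ∑ k ∈ Sᶜ.erase j, ωhat k * psi X S j k i := by
      intro i; simp only [hZdef, zvec]; ring
    have hstep : ∀ i, Z i * psi X S j j i
        = Z i ^ 2 + ∑ k ∈ Sᶜ.erase j, ωhat k * (Z i * psi X S j k i) := by
      intro i
      rw [hdec i, mul_add, Finset.mul_sum]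
      congr 1
      · ring
      · exact Finset.sum_congr rfl fun k _ => by ring
    rw [Finset.sum_congr rfl fun i _ => hstep i, Finset.sum_add_distrib]
    congr 1
    rw [Finset.sum_comm]
    exact Finset.sum_congr rfl fun k _ => by rw [Finset.mul_sum]
  have h3b : ∑ k ∈ Sᶜ.erase j, ωhat k * (∑ i, Z i * psi X S j k i)
      = Real.sqrt n * lam
        * ∑ k ∈ Sᶜ.erase j, Real.sqrt (∑ i, psi X S j k i ^ 2) * |ωhat k| := by
    rw [Finset.mul_sum]
    refine Finset.sum_congr rfl fun k hk => ?_
    rw [mul_comm (ωhat k), heqk k hk, hnv k]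
    ring
  have h3nonneg : 0 ≤ Real.sqrt n * lam
      * ∑ k ∈ Sᶜ.erase j, Real.sqrt (∑ i, psi X S j k i ^ 2) * |ωhat k| := by
    have hsum : 0 ≤ ∑ k ∈ Sᶜ.erase j, Real.sqrt (∑ i, psi X S j k i ^ 2) * |ωhat k| :=
      Finset.sum_nonneg fun k _ => mul_nonneg (Real.sqrt_nonneg _) (abs_nonneg _)
    positivity
  have part3eq : ∑ i, Z i * X i j
      = (∑ i, Z i ^ 2) + Real.sqrt n * lam
        * ∑ k ∈ Sᶜ.erase j, Real.sqrt (∑ i, psi X S j k i ^ 2) * |ωhat k| := by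
    rw [hx_eq j, h3a, h3b]
  have part3le : (∑ i, Z i ^ 2) ≤ ∑ i, Z i * X i j := by
    rw [part3eq]; linarith
  refine ⟨part1, part2, ⟨part3eq, part3le⟩, ?_⟩
  -- part (iv)
  intro hzne
  have hN2 : 0 < ∑ i, Z i ^ 2 := by
    obtain ⟨i, hi⟩ := Function.ne_iff.mp hzne
    exact Finset.sum_pos' (fun _ _ => sq_nonneg _)
      ⟨i, Finset.mem_univ i,
        lt_of_le_of_ne (sq_nonneg _) (Ne.symm (pow_ne_zero 2 hi))⟩
  have hDpos : 0 < ∑ i, Z i * X i j := lt_of_lt_of_le hN2 part3le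
  rw [abs_of_pos hDpos, div_le_div_iff₀ hDpos (Real.sqrt_pos.mpr hN2),
    Real.mul_self_sqrt hN2.le]
  linarith [part3le]

end HOT
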